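/- arXiv:1202.1948 — 2 statements merged into one kernel-verified Lean document; each statement's English description precedes it below -/
import Mathlib

section
/- Let β > 1 satisfy β² = mβ + 1 with m ≥ 1 an integer. Let a, b ∈ ℤ and define the sequence G_0 = b, G_1 = a, G_{k+2} = m·G_{k+1} + G_k. If a + b/β > 0, then there exists an index k ≥ 0 such that both G_k ≥ 0 and G_{k+1} ≥ 0. -/
/-- For β > 1 with β² = mβ + 1, m ≥ 1, and the sequence G₀ = b, G₁ = a,
G_{k+2} = m G_{k+1} + G_k: if a + b/β > 0 then some two consecutive terms
G_k, G_{k+1} are both nonnegative. -/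
theorem stmt6 (m : ℤ) (hm : 1 ≤ m) (β : ℝ) (hβ : 1 < β)
    (hβq : β ^ 2 = m * β + 1)
    (a b : ℤ) (G : ℕ → ℤ)
    (hG0 : G 0 = b) (hG1 : G 1 = a)
    (hGrec : ∀ k, G (k + 2) = m * G (k + 1) + G k)
    (hpos : (a : ℝ) + (b : ℝ) / β > 0) :
    ∃ k : ℕ, 0 ≤ G k ∧ 0 ≤ G (k + 1) := by
  have hβ0 : (0:ℝ) < β := lt_trans one_pos hβ
  have hβne : β ≠ 0 := ne_of_gt hβ0
  set z : ℕ → ℝ := fun k => (G (k+1) : ℝ) + (G k : ℝ) / β with hzdef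
  have hzrec : ∀ k, z (k+1) = β * z k := by
    intro k
    simp only [hzdef]
    rw [hGrec k]
    push_cast
    field_simp
    linear_combination (-((G (k+1)):ℝ)) * hβq
  have hzpow : ∀ k, z k = β ^ k * z 0 := by
    intro k
    induction k with
    | zero => simp
    | succ n ih => rw [hzrec n, ih, pow_succ]; ring
  have hz0 : z 0 = (a:ℝ) + (b:ℝ)/β := by simp [hzdef, hG0, hG1]
  have hzpos : ∀ k, 0 < z k := by
    intro k
    rw [hzpow k, hz0]
    exact mul_pos (pow_pos hβ0 k) hpos
  set w : ℕ → ℝ := fun k => (G (k+1) : ℝ) - β * (G k : ℝ) with hwdef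
  have hwrec : ∀ k, w (k+1) = (-(1/β)) * w k := by
    intro k
    simp only [hwdef]
    rw [hGrec k]
    push_cast
    field_simp
    linear_combination (-((G (k+1)):ℝ)) * hβq
  have habs : ∀ k, |w k| = (1/β) ^ k * |w 0| := by
    intro k
    induction k with
    | zero => simp
    | succ n ih =>
      rw [hwrec n, abs_mul, ih, pow_succ]
      rw [abs_neg, abs_of_pos (by positivity : (0:ℝ) < 1/β)]
      ring
  -- key: if |w k| < β then 0 ≤ G k
  have key : ∀ k, |w k| < β → 0 ≤ G k := by
    intro k hk
    by_contra hneg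
    push_neg at hneg
    have hGk : (G k : ℝ) ≤ -1 := by exact_mod_cast (show G k ≤ -1 by omega)
    have hw : w k = (G (k+1) : ℝ) - β * (G k : ℝ) := rfl
    have habsk := abs_lt.mp hk
    have hGk1 : (G (k+1) : ℝ) < 0 := by nlinarith [habsk.2]
    have : z k < 0 := by
      have : (G k : ℝ) / β < 0 := div_neg_of_neg_of_pos (by linarith) hβ0
      simp only [hzdef]
      linarith
    linarith [hzpos k]
  -- choose N with |w N| < β, and then |w (N+1)| ≤ |w N| < β
  have hr1 : (1:ℝ)/β < 1 := by rw [div_lt_one hβ0]; linarith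
  have hr0 : (0:ℝ) ≤ 1/β := by positivity
  obtain ⟨N, hN⟩ := exists_pow_lt_of_lt_one
    (show (0:ℝ) < β / (|w 0| + 1) by positivity) hr1
  have hwN : |w N| < β := by
    rw [habs N]
    have h1 : |w 0| < |w 0| + 1 := by linarith
    have h2 : (0:ℝ) ≤ (1/β)^N := pow_nonneg hr0 N
    calc (1/β)^N * |w 0| ≤ (1/β)^N * (|w 0| + 1) := by
          exact mul_le_mul_of_nonneg_left (by linarith) h2
      _ < (β / (|w 0| + 1)) * (|w 0| + 1) := by
          apply mul_lt_mul_of_pos_right hN (by positivity)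
      _ = β := by field_simp
  have hwN1 : |w (N+1)| < β := by
    have := habs (N+1)
    rw [habs N] at hwN
    rw [this, pow_succ]
    have h2 : (0:ℝ) ≤ (1/β)^N * |w 0| := mul_nonneg (pow_nonneg hr0 N) (abs_nonneg _)
    calc (1/β)^N * (1/β) * |w 0| = (1/β) * ((1/β)^N * |w 0|) := by ring
      _ ≤ 1 * ((1/β)^N * |w 0|) := mul_le_mul_of_nonneg_right (le_of_lt hr1) h2
      _ = (1/β)^N * |w 0| := by ring
      _ < β := hwN
  exact ⟨N, key N hwN, key (N+1) hwN1⟩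
end

section
/- Let β > 1 satisfy β² = mβ - 1, m ≥ 3, with conjugate β' = 1/β. For every rational x with -β/(β+1) < x < 1/(β+1), there exists an even positive integer N such that (β^N - 1)x ∈ ℤ[β] and the Galois conjugate ((1/β)^N - 1)x = (β'^N - 1)x lies in the interval (-1/(β+1), β/(β+1)). -/
private def stmtA (m : ℤ) : ℕ → ℤ × ℤ
  | 0 => (0, 1)
  | n + 1 => (m * (stmtA m n).1 + (stmtA m n).2, -(stmtA m n).1)

private lemma stmtA_pow (m : ℤ) (β : ℝ) (hβq : β ^ 2 = m * β - 1) :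
    ∀ n : ℕ, β ^ n = ((stmtA m n).1 : ℝ) * β + ((stmtA m n).2 : ℝ) := by
  intro n
  induction n with
  | zero => simp [stmtA]
  | succ n ih =>
      have : β ^ (n + 1) = β ^ n * β := by ring
      rw [this, ih, stmtA]
      push_cast
      linear_combination ((stmtA m n).1 : ℝ) * hβq

/-- For β > 1 with β² = mβ - 1, m ≥ 3 (conjugate β' = 1/β): for every
rational x with -β/(β+1) < x < 1/(β+1) there is an even positive N with
(β^N - 1)x ∈ ℤ[β] and ((1/β)^N - 1)x ∈ (-1/(β+1), β/(β+1)). -/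
theorem stmt18 (m : ℤ) (hm : 3 ≤ m) (β : ℝ) (hβ : 1 < β)
    (hβq : β ^ 2 = m * β - 1)
    (x : ℚ) (hx1 : -β / (β + 1) < (x : ℝ)) (hx2 : (x : ℝ) < 1 / (β + 1)) :
    ∃ N : ℕ, Even N ∧ 0 < N ∧
      (β ^ N - 1) * (x : ℝ) ∈ Subring.closure ({β} : Set ℝ) ∧
      (β⁻¹ ^ N - 1) * (x : ℝ) ∈ Set.Ioo (-(1 / (β + 1))) (β / (β + 1)) := by
  set q : ℕ := x.den with hq
  haveI : NeZero q := ⟨x.den_pos.ne'⟩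
  -- the step map on (ZMod q)²
  set g : ZMod q × ZMod q → ZMod q × ZMod q :=
    fun p => ((m : ZMod q) * p.1 + p.2, -p.1) with hg
  have hgbij : Function.Bijective g := by
    refine Function.bijective_iff_has_inverse.mpr
      ⟨fun p => (-p.2, p.1 + (m : ZMod q) * p.2), ?_, ?_⟩
    · intro p; simp [hg]
    · intro p; simp [hg]
  -- reduction of the integer sequence
  have hred : ∀ n : ℕ, (((stmtA m n).1 : ZMod q), ((stmtA m n).2 : ZMod q))
      = g^[n] (0, 1) := by
    intro n
    induction n with
    | zero => simp [stmtA]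
    | succ n ih =>
        rw [Function.iterate_succ_apply', ← ih]
        simp only [stmtA, hg]
        push_cast
        rfl
  -- find a positive period k
  obtain ⟨i, j, hij, heq⟩ := Finite.exists_ne_map_eq_of_infinite
    (fun n : ℕ => g^[n] (0, 1) : ℕ → ZMod q × ZMod q)
  wlog hlt : i < j generalizing i j
  · exact this j i hij.symm heq.symm (by omega)
  have hk : g^[j - i] (0, 1) = (0, 1) := by
    have hinj : Function.Injective g^[i] := (hgbij.iterate i).injective
    apply hinj
    rw [← Function.iterate_add_apply]
    have : i + (j - i) = j := by omega
    rw [this]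
    exact heq.symm
  set k : ℕ := j - i with hkdef
  have hkpos : 0 < k := by omega
  have hper : ∀ t : ℕ, g^[k * t] (0, 1) = (0, 1) := by
    intro t
    rw [Function.iterate_mul]
    exact Function.iterate_fixed hk t
  -- tendsto : (β⁻¹^n - 1)*x → -x ∈ Ioo
  have hβ0 : (0:ℝ) < β := lt_trans one_pos hβ
  have hβ1 : (0:ℝ) < β + 1 := by linarith
  have hmem : -(x:ℝ) ∈ Set.Ioo (-(1 / (β + 1))) (β / (β + 1)) := by
    have hx1' : -(β / (β + 1)) < (x:ℝ) := by rw [← neg_div]; exact hx1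
    constructor <;> linarith
  have htend : Filter.Tendsto (fun n : ℕ => (β⁻¹ ^ n - 1) * (x:ℝ))
      Filter.atTop (nhds (-(x:ℝ))) := by
    have h1 : Filter.Tendsto (fun n : ℕ => β⁻¹ ^ n) Filter.atTop (nhds 0) := by
      apply tendsto_pow_atTop_nhds_zero_of_lt_one
      · positivity
      · rw [inv_lt_one_iff₀]; right; exact hβ
    have := ((h1.sub_const 1).mul_const (x:ℝ))
    simpa using this
  have hev : ∀ᶠ n : ℕ in Filter.atTop,
      (β⁻¹ ^ n - 1) * (x:ℝ) ∈ Set.Ioo (-(1 / (β + 1))) (β / (β + 1)) :=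
    htend.eventually (isOpen_Ioo.mem_nhds hmem)
  obtain ⟨M, hM⟩ := Filter.eventually_atTop.mp hev
  -- choose N
  set N : ℕ := k * (2 * (M + 1)) with hN
  have hNge : M ≤ N := by
    have : 1 * (2 * (M + 1)) ≤ k * (2 * (M + 1)) :=
      Nat.mul_le_mul_right _ hkpos
    omega
  have hNpos : 0 < N := by positivity
  refine ⟨N, ⟨k * (M + 1), by rw [hN]; ring⟩, hNpos, ?_, hM N hNge⟩
  -- divisibility
  have hfix : (((stmtA m N).1 : ZMod q), ((stmtA m N).2 : ZMod q)) = (0, 1) := by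
    rw [hred]; exact hper _
  have h1 : ((stmtA m N).1 : ZMod q) = 0 := by
    have := congrArg Prod.fst hfix; simpa using this
  have h2 : (((stmtA m N).2 - 1 : ℤ) : ZMod q) = 0 := by
    have := congrArg Prod.snd hfix
    push_cast
    simp at this
    rw [this]; ring
  obtain ⟨c, hc⟩ := (ZMod.intCast_zmod_eq_zero_iff_dvd _ q).mp h1
  obtain ⟨d, hd⟩ := (ZMod.intCast_zmod_eq_zero_iff_dvd _ q).mp h2
  -- express (β^N - 1)*x
  have hden : ((q : ℝ)) ≠ 0 := Nat.cast_ne_zero.mpr x.den_pos.ne'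
  have hxval : (x : ℝ) = (x.num : ℝ) / (q : ℝ) := by
    rw [hq]; exact Rat.cast_def x
  have hkey : (β ^ N - 1) * (x : ℝ)
      = ((c * x.num : ℤ) : ℝ) * β + ((d * x.num : ℤ) : ℝ) := by
    rw [stmtA_pow m β hβq N, hxval]
    have hc' : ((stmtA m N).1 : ℝ) = (q : ℝ) * (c : ℝ) := by exact_mod_cast hc
    have hd' : ((stmtA m N).2 : ℝ) - 1 = (q : ℝ) * (d : ℝ) := by
      have : ((stmtA m N).2 - 1 : ℤ) = (q : ℤ) * d := hd
      exact_mod_cast this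
    push_cast
    field_simp
    linear_combination ((x.num : ℝ) * β) * hc' + (x.num : ℝ) * hd'
  rw [hkey]
  have hβmem : β ∈ Subring.closure ({β} : Set ℝ) :=
    Subring.subset_closure rfl
  exact add_mem (mul_mem (intCast_mem _ _) hβmem) (intCast_mem _ _)
end
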